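/- There exists a constant C > 0 such that for all positive integers n and m, n + m·α(m+n, n) ≤ C·(m + n·log* n + n). -/

import Mathlib

/-- The Ackermann function: `A 1 j = 2^j`, `A (i+1) 1 = A i 2`,
`A (i+1) (j+1) = A i (A (i+1) j)` for `i, j ≥ 1`. Values at `i = 0` or `j = 0`
are irrelevant (set to `0`). -/
def ackFn : ℕ → ℕ → ℕ
  | 0, _ => 0
  | 1, j => 2 ^ j
  | _ + 2, 0 => 0
  | i + 2, 1 => ackFn (i + 1) 2
  | i + 2, j + 2 => ackFn (i + 1) (ackFn (i + 2) (j + 1))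
termination_by i j => (i, j)

/-- Inverse Ackermann function: `α(m,n) = min {i ≥ 1 : A(i,⌊m/n⌋) > ⌊log₂ n⌋}`. -/
noncomputable def ackAlpha (m n : ℕ) : ℕ :=
  sInf {i : ℕ | 1 ≤ i ∧ Nat.log 2 n < ackFn i (m / n)}

/-- Iterated logarithm: the least `k ≥ 0` such that applying `⌊log₂ ·⌋`
`k` times to `n` yields a value at most `1`. -/
def logStar (n : ℕ) : ℕ :=
  if n ≤ 1 then 0 else logStar (Nat.log 2 n) + 1
decreasing_by exact Nat.log_lt_self 2 (by omega)


/-- Tower function: `tower t = 2^2^...^2` (`t` twos). -/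
def tower : ℕ → ℕ
  | 0 => 1
  | t + 1 => 2 ^ tower t

lemma tower_pos (t : ℕ) : 1 ≤ tower t := by
  cases t with
  | zero => simp [tower]
  | succ t => exact Nat.one_le_two_pow

lemma two_mul_le_two_pow {s : ℕ} (hs : 1 ≤ s) : 2 * s ≤ 2 ^ s := by
  induction s with
  | zero => omega
  | succ s ih =>
    rcases Nat.eq_or_lt_of_le hs with h | h
    · have : s = 0 := by omega
      subst this; norm_num
    · have h1 : 1 ≤ s := by omega
      have h2 := ih h1
      have h3 : 2 ^ (s + 1) = 2 * 2 ^ s := by rw [pow_succ]; ring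
      omega

lemma two_mul_le_tower {t : ℕ} (ht : 1 ≤ t) : 2 * t ≤ tower t := by
  induction t with
  | zero => omega
  | succ t ih =>
    rcases Nat.eq_or_lt_of_le ht with h | h
    · have : t = 0 := by omega
      subst this; simp [tower]
    · have h1 : 1 ≤ t := by omega
      have h2 := ih h1
      have h3 : 2 * tower t ≤ 2 ^ tower t := two_mul_le_two_pow (tower_pos t)
      have h4 : tower (t + 1) = 2 ^ tower t := rfl
      omega

lemma tower_lt_tower_succ (t : ℕ) : tower t < tower (t + 1) := by
  have h1 : tower (t + 1) = 2 ^ tower t := rfl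
  have h2 := Nat.lt_two_pow_self (n := tower t)
  omega

lemma tower_mono : Monotone tower :=
  monotone_nat_of_le_succ fun t => (tower_lt_tower_succ t).le

lemma logStar_mono : ∀ {a b : ℕ}, a ≤ b → logStar a ≤ logStar b := by
  intro a
  induction a using Nat.strong_induction_on with
  | _ a ih =>
    intro b hab
    by_cases ha : a ≤ 1
    · rw [logStar]; simp [ha]
    · have hb : ¬ b ≤ 1 := by omega
      conv_lhs => rw [logStar]
      conv_rhs => rw [logStar]
      simp only [ha, hb, if_false]
      have hlog : Nat.log 2 a ≤ Nat.log 2 b := Nat.log_mono_right hab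
      have hlt : Nat.log 2 a < a := Nat.log_lt_self 2 (by omega)
      exact Nat.succ_le_succ (ih _ hlt hlog)

lemma logStar_tower (t : ℕ) : logStar (tower t) = t := by
  induction t with
  | zero => rw [logStar]; simp [tower]
  | succ t ih =>
    have h2 : tower (t + 1) = 2 ^ tower t := rfl
    have hge : 2 ≤ tower (t + 1) := by
      have h3 := tower_pos t
      have h4 : 2 ^ 1 ≤ 2 ^ tower t := Nat.pow_le_pow_right (by norm_num) h3
      omega
    rw [logStar]
    simp only [show ¬ tower (t + 1) ≤ 1 by omega, if_false]
    rw [h2, Nat.log_pow (by norm_num), ih]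

lemma le_logStar_of_tower_le {t N : ℕ} (h : tower t ≤ N) : t ≤ logStar N := by
  calc t = logStar (tower t) := (logStar_tower t).symm
    _ ≤ logStar N := logStar_mono h

/-- `A(i, x) ≥ 2^x` for `i ≥ 1`, `x ≥ 1`. -/
lemma two_pow_le_ackFn : ∀ i x : ℕ, 1 ≤ i → 1 ≤ x → 2 ^ x ≤ ackFn i x := by
  intro i
  induction i with
  | zero => omega
  | succ i ih =>
    cases i with
    | zero => intro x _ _; simp [ackFn]
    | succ i =>
      have key : ∀ x : ℕ, 2 ^ (x + 1) ≤ ackFn (i + 2) (x + 1) := by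
        intro x
        induction x with
        | zero =>
          have h1 : ackFn (i + 2) 1 = ackFn (i + 1) 2 := by simp [ackFn]
          have h2 : 2 ^ 2 ≤ ackFn (i + 1) 2 := ih 2 (by omega) (by omega)
          rw [h1]; omega
        | succ x ihx =>
          have h1 : ackFn (i + 2) (x + 2) = ackFn (i + 1) (ackFn (i + 2) (x + 1)) := by
            simp [ackFn]
          have h3 : 1 ≤ ackFn (i + 2) (x + 1) := by
            have := Nat.one_le_two_pow (n := x + 1)
            omega
          have h4 : 2 ^ (ackFn (i + 2) (x + 1)) ≤ ackFn (i + 1) (ackFn (i + 2) (x + 1)) :=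
            ih _ (by omega) h3
          have h5 : x + 2 ≤ ackFn (i + 2) (x + 1) := by
            have := Nat.lt_two_pow_self (n := x + 1)
            omega
          have h6 : 2 ^ (x + 2) ≤ 2 ^ (ackFn (i + 2) (x + 1)) :=
            Nat.pow_le_pow_right (by norm_num) h5
          rw [h1]
          calc 2 ^ (x + 1 + 1) = 2 ^ (x + 2) := by ring_nf
            _ ≤ 2 ^ (ackFn (i + 2) (x + 1)) := h6
            _ ≤ ackFn (i + 1) (ackFn (i + 2) (x + 1)) := h4
      intro x _ hx
      obtain ⟨y, rfl⟩ : ∃ y, x = y + 1 := ⟨x - 1, by omega⟩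
      exact key y

/-- `A(i, j) ≥ tower((i-1)·j)` for `i ≥ 2`, `j ≥ 1`. -/
lemma tower_le_ackFn : ∀ i j : ℕ, 2 ≤ i → 1 ≤ j → tower ((i - 1) * j) ≤ ackFn i j := by
  intro i
  induction i with
  | zero => omega
  | succ i ih =>
    cases i with
    | zero => omega
    | succ i =>
      cases i with
      | zero =>
        -- base i = 2 : in fact ackFn 2 (j+1) ≥ tower (j+2)
        have key : ∀ j : ℕ, tower (j + 2) ≤ ackFn 2 (j + 1) := by
          intro j
          induction j with
          | zero =>
            have h1 : ackFn 2 1 = ackFn 1 2 := by simp [ackFn]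
            rw [h1]; simp [ackFn, tower]
          | succ j ihj =>
            have h1 : ackFn 2 (j + 2) = ackFn 1 (ackFn 2 (j + 1)) := by simp [ackFn]
            have h3 : ackFn 1 (ackFn 2 (j + 1)) = 2 ^ ackFn 2 (j + 1) := by simp [ackFn]
            rw [h1, h3]
            calc tower (j + 3) = 2 ^ tower (j + 2) := rfl
              _ ≤ 2 ^ ackFn 2 (j + 1) := Nat.pow_le_pow_right (by norm_num) ihj
        intro j _ hj
        obtain ⟨y, rfl⟩ : ∃ y, j = y + 1 := ⟨j - 1, by omega⟩
        calc tower ((2 - 1) * (y + 1)) = tower (y + 1) := by norm_num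
          _ ≤ tower (y + 2) := tower_mono (by omega)
          _ ≤ ackFn 2 (y + 1) := key y
      | succ i =>
        -- step : i + 3, using ih at i + 2
        have key : ∀ j : ℕ, tower ((i + 2) * (j + 1)) ≤ ackFn (i + 3) (j + 1) := by
          intro j
          induction j with
          | zero =>
            have h1 : ackFn (i + 3) 1 = ackFn (i + 2) 2 := by simp [ackFn]
            have h2 : tower ((i + 1) * 2) ≤ ackFn (i + 2) 2 := ih 2 (by omega) (by omega)
            have h3 : (i + 2) * 1 ≤ (i + 1) * 2 := by omega
            calc tower ((i + 2) * 1) ≤ tower ((i + 1) * 2) := tower_mono h3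
              _ ≤ ackFn (i + 2) 2 := h2
              _ = ackFn (i + 3) 1 := h1.symm
          | succ j ihj =>
            have h1 : ackFn (i + 3) (j + 2) = ackFn (i + 2) (ackFn (i + 3) (j + 1)) := by
              simp [ackFn]
            set x := ackFn (i + 3) (j + 1) with hx
            have hij1 : 1 ≤ (i + 2) * (j + 1) := by nlinarith
            have h3 : 2 * ((i + 2) * (j + 1)) ≤ tower ((i + 2) * (j + 1)) :=
              two_mul_le_tower hij1
            have hx1 : 1 ≤ x := by
              have := tower_pos ((i + 2) * (j + 1))
              omega
            have h4 : tower ((i + 1) * x) ≤ ackFn (i + 2) x := by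
              have := ih x (by omega) hx1
              calc tower ((i + 1) * x) = tower ((i + 2 - 1) * x) := by norm_num
                _ ≤ ackFn (i + 2) x := this
            have h5 : (i + 2) * (j + 2) ≤ (i + 1) * x := by
              have hxge : 2 * ((i + 2) * (j + 1)) ≤ x := le_trans h3 ihj
              nlinarith
            calc tower ((i + 2) * (j + 2)) ≤ tower ((i + 1) * x) := tower_mono h5
              _ ≤ ackFn (i + 2) x := h4
              _ = ackFn (i + 3) (j + 2) := h1.symm
        intro j _ hj
        obtain ⟨y, rfl⟩ : ∃ y, j = y + 1 := ⟨j - 1, by omega⟩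
        calc tower ((i + 3 - 1) * (y + 1)) = tower ((i + 2) * (y + 1)) := by norm_num
          _ ≤ ackFn (i + 3) (y + 1) := key y

/-- There is a constant `C > 0` such that for all positive integers `n, m`,
`n + m·α(m+n, n) ≤ C·(m + n·log* n + n)`. -/
theorem ackAlpha_bound :
    ∃ C : ℕ, 0 < C ∧ ∀ n m : ℕ, 1 ≤ n → 1 ≤ m →
      n + m * ackAlpha (m + n) n ≤ C * (m + n * logStar n + n) := by
  refine ⟨3, by norm_num, fun n m hn hm => ?_⟩
  set j := (m + n) / n with hj
  have hj1 : 1 ≤ j := Nat.one_le_div_iff (by omega) |>.mpr (by omega)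
  set S : Set ℕ := {i : ℕ | 1 ≤ i ∧ Nat.log 2 n < ackFn i ((m + n) / n)} with hS
  have hne : S.Nonempty := by
    refine ⟨Nat.log 2 n + 2, by simp [hS], ?_⟩
    show Nat.log 2 n < ackFn (Nat.log 2 n + 2) j
    have h1 : tower ((Nat.log 2 n + 2 - 1) * j) ≤ ackFn (Nat.log 2 n + 2) j :=
      tower_le_ackFn _ j (by omega) hj1
    have h2 : Nat.log 2 n + 1 ≤ (Nat.log 2 n + 2 - 1) * j := by
      calc Nat.log 2 n + 1 = (Nat.log 2 n + 1) * 1 := by ring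
        _ ≤ (Nat.log 2 n + 1) * j := Nat.mul_le_mul_left _ hj1
        _ = (Nat.log 2 n + 2 - 1) * j := by norm_num
    have h3 : 2 * ((Nat.log 2 n + 2 - 1) * j) ≤ tower ((Nat.log 2 n + 2 - 1) * j) :=
      two_mul_le_tower (by omega)
    omega
  set k := ackAlpha (m + n) n with hk
  have hksInf : k = sInf S := rfl
  have hkS : k ∈ S := hksInf ▸ Nat.sInf_mem hne
  obtain ⟨hk1, hklog⟩ := hkS
  have hnj : n * j ≤ m + n := by
    rw [hj, mul_comm]
    exact Nat.div_mul_le_self _ _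
  have hmnj : m ≤ n * j := by
    have h1 : n * j + (m + n) % n = m + n := Nat.div_add_mod (m + n) n
    have h2 : (m + n) % n < n := Nat.mod_lt _ (by omega)
    linarith
  by_cases hk2 : k ≤ 2
  · have hmk : m * k ≤ m * 2 := Nat.mul_le_mul_left _ hk2
    have h0 : 0 ≤ n * logStar n := Nat.zero_le _
    linarith
  · -- k ≥ 3 : then k - 1 ∉ S and k - 1 ≥ 2
    push_neg at hk2
    have hnotS : k - 1 ∉ S := by
      rw [hksInf]
      exact Nat.notMem_of_lt_sInf (by omega)
    have hle : ackFn (k - 1) j ≤ Nat.log 2 n := by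
      by_contra h
      push_neg at h
      exact hnotS ⟨by omega, h⟩
    have htow : tower ((k - 2) * j) ≤ Nat.log 2 n := by
      have h1 : tower ((k - 1 - 1) * j) ≤ ackFn (k - 1) j :=
        tower_le_ackFn (k - 1) j (by omega) hj1
      have h2 : k - 1 - 1 = k - 2 := by omega
      rw [h2] at h1
      omega
    have hn2 : 2 ≤ n := by
      by_contra h
      have hn1 : n = 1 := by omega
      have := tower_pos ((k - 2) * j)
      simp [hn1] at htow
      omega
    have hstar : (k - 2) * j ≤ logStar (Nat.log 2 n) := le_logStar_of_tower_le htow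
    have hsplit : logStar n = logStar (Nat.log 2 n) + 1 := by
      rw [logStar]; simp [show ¬ n ≤ 1 by omega]
    have hkj : (k - 2) * j + 1 ≤ logStar n := by omega
    have h1 : m * (k - 2) ≤ (n * j) * (k - 2) := Nat.mul_le_mul_right _ hmnj
    have h2 : (n * j) * (k - 2) + n ≤ n * logStar n := by
      have e : (n * j) * (k - 2) + n = n * ((k - 2) * j + 1) := by ring
      rw [e]
      exact Nat.mul_le_mul_left _ hkj
    have h3 : m * k = m * (k - 2) + 2 * m := by
      have hk3 : k - 2 + 2 = k := by omega
      calc m * k = m * (k - 2 + 2) := by rw [hk3]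
        _ = m * (k - 2) + 2 * m := by ring
    nlinarith [h1, h2, h3]
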